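/- Fix r ≥ 0, let 0 < η < 1, and define α^{(ℓ)} = C₀(1−η)^ℓ + B·∑_{s=1}^{ℓ} η(1−η)^{ℓ−s+1} for constants C₀, B ≥ 0. Then for 0 ≤ c < 1: ∑_{ℓ=1}^{r} α^{(ℓ)} (1 − η + ηc)^{r−ℓ} ≤ r·C₀·(1 − η + ηc)^{r} + B/(η(1 − c)). -/

import Mathlib

open Finset

lemma geo_aux (x : ℝ) (hx0 : 0 ≤ x) (n : ℕ) :
    (1 - x) * ∑ i ∈ range n, x ^ i ≤ 1 := by
  have h := geom_sum_mul x n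
  nlinarith [pow_nonneg hx0 n]

lemma reindex_sum (f : ℕ → ℝ) (m : ℕ) :
    ∑ l ∈ Finset.Icc 1 m, f (m - l) = ∑ i ∈ range m, f i := by
  refine Finset.sum_nbij' (fun l => m - l) (fun i => m - i) ?_ ?_ ?_ ?_ ?_ <;>
    intro a ha <;> simp only [Finset.mem_Icc, Finset.mem_range] at * <;> omega

lemma shift_sum (q : ℝ) (m : ℕ) :
    ∑ l ∈ Finset.Icc 1 m, q ^ (m - l) = ∑ i ∈ range m, q ^ i :=
  reindex_sum (fun i => q ^ i) m

theorem alpha_weighted_sum_bound (η c C0 B : ℝ) (r : ℕ) (α : ℕ → ℝ)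
    (hη0 : 0 < η) (hη1 : η < 1) (hc0 : 0 ≤ c) (hc1 : c < 1)
    (hC0 : 0 ≤ C0) (hB : 0 ≤ B)
    (hα : ∀ l : ℕ, α l = C0 * (1 - η)^l
        + B * ∑ s ∈ Finset.Icc 1 l, η * (1 - η)^(l - s + 1)) :
    ∑ l ∈ Finset.Icc 1 r, α l * (1 - η + η * c)^(r - l)
      ≤ r * C0 * (1 - η + η * c)^r + B / (η * (1 - c)) := by
  set q : ℝ := 1 - η + η * c with hqdef
  have h1η : (0:ℝ) ≤ 1 - η := by linarith
  have hq0 : 0 ≤ q := by nlinarith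
  have hq1 : q < 1 := by nlinarith
  have hle : 1 - η ≤ q := by nlinarith
  have key : ∀ l ∈ Finset.Icc 1 r,
      α l * q ^ (r - l) ≤ C0 * q ^ r + B * q ^ (r - l) := by
    intro l hl
    rw [Finset.mem_Icc] at hl
    rw [hα l]
    have hqrl : (0:ℝ) ≤ q ^ (r - l) := pow_nonneg hq0 _
    have h1 : C0 * (1 - η) ^ l * q ^ (r - l) ≤ C0 * q ^ r := by
      have hp : (1 - η) ^ l ≤ q ^ l := pow_le_pow_left₀ h1η hle l
      have hmul : q ^ l * q ^ (r - l) = q ^ r := by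
        rw [← pow_add]; congr 1; omega
      have hpl : (0:ℝ) ≤ (1 - η) ^ l := pow_nonneg h1η l
      nlinarith [mul_le_mul_of_nonneg_right hp hqrl]
    have h2 : (∑ s ∈ Finset.Icc 1 l, η * (1 - η) ^ (l - s + 1)) ≤ 1 := by
      have heq : ∑ s ∈ Finset.Icc 1 l, η * (1 - η) ^ (l - s + 1)
          = η * (1 - η) * ∑ i ∈ range l, (1 - η) ^ i := by
        rw [Finset.mul_sum]
        have := reindex_sum (fun j => η * (1 - η) ^ (j + 1)) l
        rw [this]
        apply Finset.sum_congr rfl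
        intro i _
        rw [pow_succ]
        ring
      rw [heq]
      have hg := geo_aux (1 - η) h1η l
      have hη' : 1 - (1 - η) = η := by ring
      rw [hη'] at hg
      have hsnn : (0:ℝ) ≤ ∑ i ∈ range l, (1 - η) ^ i :=
        Finset.sum_nonneg fun i _ => pow_nonneg h1η i
      nlinarith
    have hinn : (0:ℝ) ≤ ∑ s ∈ Finset.Icc 1 l, η * (1 - η) ^ (l - s + 1) :=
      Finset.sum_nonneg fun s _ => by positivity
    have h2' : B * (∑ s ∈ Finset.Icc 1 l, η * (1 - η) ^ (l - s + 1)) * q ^ (r - l)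
        ≤ B * q ^ (r - l) := by
      have := mul_le_mul_of_nonneg_right (mul_le_mul_of_nonneg_left h2 hB) hqrl
      linarith
    nlinarith
  calc ∑ l ∈ Finset.Icc 1 r, α l * q ^ (r - l)
      ≤ ∑ l ∈ Finset.Icc 1 r, (C0 * q ^ r + B * q ^ (r - l)) :=
        Finset.sum_le_sum key
    _ = r * (C0 * q ^ r) + B * ∑ l ∈ Finset.Icc 1 r, q ^ (r - l) := by
        rw [Finset.sum_add_distrib, Finset.sum_const, ← Finset.mul_sum]
        simp [Nat.card_Icc]
    _ ≤ r * C0 * q ^ r + B / (η * (1 - c)) := by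
        have hshift := shift_sum q r
        have hg := geo_aux q hq0 r
        have h1q : 1 - q = η * (1 - c) := by ring
        have hpos : 0 < η * (1 - c) := by nlinarith
        have hsum : ∑ l ∈ Finset.Icc 1 r, q ^ (r - l) ≤ 1 / (η * (1 - c)) := by
          rw [hshift, le_div_iff₀ hpos, ← h1q, mul_comm]
          exact hg
        have : B * ∑ l ∈ Finset.Icc 1 r, q ^ (r - l) ≤ B / (η * (1 - c)) := by
          calc B * ∑ l ∈ Finset.Icc 1 r, q ^ (r - l) ≤ B * (1 / (η * (1 - c))) :=
                mul_le_mul_of_nonneg_left hsum hB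
            _ = B / (η * (1 - c)) := by ring
        linarith [this]
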